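/- arXiv:1507.07980 — 3 statements merged into one kernel-verified Lean document; each statement's English description precedes it below -/
import Mathlib

section
/- The imaginary part of Li₂(z) equals zero if and only if z lies in the real interval (−∞, 1]. -/
open Complex

/-- The principal branch of the dilogarithm, `Li₂(z) = -∫₀^z log(1-u)/u du`
integrated along the straight line from `0` to `z`. -/
noncomputable def dilog (z : ℂ) : ℂ :=
  -∫ t in (0:ℝ)..1, Complex.log (1 - (t : ℂ) * z) / (t : ℂ)

open MeasureTheory Set intervalIntegral Real

/-- The integrand of the dilogarithm. -/
private noncomputable def dilogF (z : ℂ) : ℝ → ℂ :=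
  fun t => Complex.log (1 - (t : ℂ) * z) / (t : ℂ)

private lemma dilogF_meas (z : ℂ) : Measurable (dilogF z) := by
  apply Measurable.div
  · exact Complex.measurable_log.comp
      (measurable_const.sub (Complex.measurable_ofReal.mul_const z))
  · exact Complex.measurable_ofReal

private lemma norm_clog_le (w : ℂ) : ‖Complex.log w‖ ≤ |Real.log ‖w‖| + π := by
  have h := Complex.norm_le_abs_re_add_abs_im (Complex.log w)
  rw [Complex.log_re, Complex.log_im] at h
  exact h.trans (by gcongr; exact Complex.abs_arg_le_pi w)

private lemma dilogF_near_zero (z : ℂ) :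
    IntervalIntegrable (dilogF z) volume 0 ((2 * (‖z‖ + 1))⁻¹) := by
  set δ : ℝ := (2 * (‖z‖ + 1))⁻¹ with hδdef
  have hδ : 0 < δ := by positivity
  rw [intervalIntegrable_iff, uIoc_of_le hδ.le]
  apply Measure.integrableOn_of_bounded (M := 3 / 2 * ‖z‖) measure_Ioc_lt_top.ne
    (dilogF_meas z).aestronglyMeasurable
  rw [ae_restrict_iff' measurableSet_Ioc]
  filter_upwards with t ht
  have ht0 : 0 < t := ht.1
  have htδ : t ≤ δ := ht.2
  have hnorm : ‖-((t : ℂ) * z)‖ = t * ‖z‖ := by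
    rw [norm_neg, norm_mul, Complex.norm_real, Real.norm_eq_abs, abs_of_pos ht0]
  have hδz : δ * ‖z‖ ≤ 1 / 2 := by
    have h2 : (0:ℝ) < 2 * (‖z‖ + 1) := by positivity
    rw [hδdef, inv_mul_eq_div, div_le_div_iff₀ h2 (by norm_num)]
    nlinarith [norm_nonneg z]
  have hhalf : ‖-((t : ℂ) * z)‖ ≤ 1 / 2 := by
    rw [hnorm]
    exact le_trans (mul_le_mul_of_nonneg_right htδ (norm_nonneg z)) hδz
  have hlog : ‖Complex.log (1 - (t : ℂ) * z)‖ ≤ 3 / 2 * (t * ‖z‖) := by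
    have h := Complex.norm_log_one_add_half_le_self hhalf
    rw [hnorm] at h
    simpa [sub_eq_add_neg] using h
  have hF : ‖dilogF z t‖ = ‖Complex.log (1 - (t : ℂ) * z)‖ / t := by
    rw [dilogF, norm_div, Complex.norm_real, Real.norm_eq_abs, abs_of_pos ht0]
  rw [hF, div_le_iff₀ ht0]
  calc ‖Complex.log (1 - (t : ℂ) * z)‖ ≤ 3 / 2 * (t * ‖z‖) := hlog
    _ = 3 / 2 * ‖z‖ * t := by ring

private lemma log_intInt_zero_one : IntervalIntegrable Real.log volume 0 1 := by
  rw [intervalIntegrable_iff, uIoc_of_le zero_le_one]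
  have h : IntegrableOn (fun t : ℝ => -Real.log t) (Set.Ioc (0:ℝ) 1) volume := by
    apply intervalIntegral.integrableOn_deriv_of_nonneg
      (g := fun t => t - t * Real.log t)
    · exact (continuous_id.sub Real.continuous_mul_log).continuousOn
    · intro x hx
      have h := (hasDerivAt_id x).sub (Real.hasDerivAt_mul_log hx.1.ne')
      exact h.congr_deriv (by ring)
    · intro x hx
      simp only [neg_nonneg]
      exact Real.log_nonpos hx.1.le hx.2.le
  have h2 : IntegrableOn (fun t : ℝ => -(-Real.log t)) (Set.Ioc (0:ℝ) 1) volume := h.neg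
  simpa only [neg_neg] using h2

private lemma log_intInt_zero (c : ℝ) (hc : 0 ≤ c) :
    IntervalIntegrable Real.log volume 0 c := by
  rcases le_or_gt c 1 with h | h
  · refine log_intInt_zero_one.mono_set ?_
    rw [uIcc_of_le hc, uIcc_of_le zero_le_one]
    exact Icc_subset_Icc le_rfl h
  · refine log_intInt_zero_one.trans ?_
    apply ContinuousOn.intervalIntegrable
    apply Real.continuousOn_log.mono
    intro x hx
    rw [uIcc_of_le h.le] at hx
    simp only [Set.mem_compl_iff, Set.mem_singleton_iff]
    intro h0
    rw [h0] at hx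
    exact absurd hx.1 (by norm_num)

private lemma log_intInt (a b : ℝ) : IntervalIntegrable Real.log volume a b := by
  have h0 : ∀ c : ℝ, IntervalIntegrable Real.log volume 0 c := by
    intro c
    rcases le_or_gt 0 c with hc | hc
    · exact log_intInt_zero c hc
    · have h := (IntervalIntegrable.iff_comp_neg (f := Real.log) (a := 0) (b := -c)).mp (log_intInt_zero (-c) (by linarith))
      simp only [neg_zero, neg_neg] at h
      simpa only [Real.log_neg_eq_log] using h
  exact (h0 a).symm.trans (h0 b)

private lemma dilogF_intInt_im {z : ℂ} (h : IntervalIntegrable (dilogF z) volume 0 1) :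
    IntervalIntegrable (fun t => (dilogF z t).im) volume 0 1 := by
  rw [intervalIntegrable_iff, uIoc_of_le zero_le_one] at h ⊢
  exact h.im

private lemma dilog_im_eq {z : ℂ} (h : IntervalIntegrable (dilogF z) volume 0 1) :
    (dilog z).im = -∫ t in (0:ℝ)..1, (dilogF z t).im := by
  have h1 : dilog z = -∫ t in (0:ℝ)..1, dilogF z t := rfl
  rw [h1, Complex.neg_im, neg_inj, intervalIntegral.integral_of_le zero_le_one,
    intervalIntegral.integral_of_le zero_le_one]
  have h2 := _root_.integral_im (μ := volume.restrict (Set.Ioc (0:ℝ) 1))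
    (f := dilogF z) h.1
  simpa using h2.symm

private lemma dilogF_intInt_of_im_ne {z : ℂ} (hz : z.im ≠ 0) :
    IntervalIntegrable (dilogF z) volume 0 1 := by
  set δ : ℝ := (2 * (‖z‖ + 1))⁻¹ with hδdef
  have hδ : 0 < δ := by positivity
  have hδ1 : δ ≤ 1 := by
    rw [hδdef, inv_le_one_iff₀]
    right
    nlinarith [norm_nonneg z]
  refine (dilogF_near_zero z).trans ?_
  apply ContinuousOn.intervalIntegrable
  rw [uIcc_of_le hδ1]
  apply ContinuousOn.div
  · apply ContinuousOn.clog
    · fun_prop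
    · intro t ht
      apply Complex.mem_slitPlane_iff.mpr
      right
      have him : (1 - (t : ℂ) * z).im = -(t * z.im) := by
        simp [Complex.sub_im, Complex.mul_im]
      rw [him]
      have ht0 : 0 < t := lt_of_lt_of_le hδ ht.1
      intro hcon
      rcases mul_eq_zero.mp (neg_eq_zero.mp hcon) with h | h
      · exact absurd h ht0.ne'
      · exact hz h
  · fun_prop
  · intro t ht
    have ht0 : 0 < t := lt_of_lt_of_le hδ ht.1
    simpa using ht0.ne'

private lemma dilog_im_pos {z : ℂ} (hz : 0 < z.im) : 0 < (dilog z).im := by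
  have hi := dilogF_intInt_of_im_ne (ne_of_gt hz)
  rw [dilog_im_eq hi, neg_pos, ← neg_neg (∫ t in (0:ℝ)..1, (dilogF z t).im),
    ← intervalIntegral.integral_neg, neg_lt, neg_zero]
  apply intervalIntegral.intervalIntegral_pos_of_pos_on
  · exact (dilogF_intInt_im hi).neg
  · intro t ht
    have ht0 : 0 < t := ht.1
    have him : (1 - (t : ℂ) * z).im < 0 := by
      have h : (1 - (t : ℂ) * z).im = -(t * z.im) := by
        simp [Complex.sub_im, Complex.mul_im]
      rw [h]
      nlinarith [mul_pos ht0 hz]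
    have harg : (Complex.log (1 - (t : ℂ) * z)).im < 0 := by
      rw [Complex.log_im]
      exact Complex.arg_neg_iff.mpr him
    have h : (dilogF z t).im = (Complex.log (1 - (t : ℂ) * z)).im / t := by
      rw [dilogF, Complex.div_ofReal_im]
    rw [h]
    have := div_neg_of_neg_of_pos harg ht0
    linarith
  · norm_num

private lemma dilog_conj {z : ℂ} (hz : z.im ≠ 0) :
    dilog ((starRingEnd ℂ) z) = (starRingEnd ℂ) (dilog z) := by
  have h1 : dilog z = -∫ t in (0:ℝ)..1, dilogF z t := rfl
  have h2 : dilog ((starRingEnd ℂ) z) = -∫ t in (0:ℝ)..1, dilogF ((starRingEnd ℂ) z) t := rfl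
  rw [h1, h2, map_neg, neg_inj, intervalIntegral.integral_of_le zero_le_one,
    intervalIntegral.integral_of_le zero_le_one, ← _root_.integral_conj]
  apply MeasureTheory.setIntegral_congr_fun measurableSet_Ioc
  intro t ht
  have ht0 : 0 < t := ht.1
  have hargne : (1 - (t : ℂ) * z).arg ≠ π := by
    intro hcon
    rw [Complex.arg_eq_pi_iff] at hcon
    have him : (1 - (t : ℂ) * z).im = -(t * z.im) := by
      simp [Complex.sub_im, Complex.mul_im]
    rw [him] at hcon
    rcases mul_eq_zero.mp (neg_eq_zero.mp hcon.2) with h | h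
    · exact absurd h ht0.ne'
    · exact hz h
  show dilogF ((starRingEnd ℂ) z) t = (starRingEnd ℂ) (dilogF z t)
  rw [dilogF, dilogF, map_div₀, Complex.conj_ofReal, ← Complex.log_conj _ hargne]
  congr 1
  rw [map_sub, map_one, map_mul, Complex.conj_ofReal]

private lemma dilog_real_im_le_one {x : ℝ} (hx : x ≤ 1) : (dilog (x : ℂ)).im = 0 := by
  have h1 : dilog (x : ℂ) = -∫ t in (0:ℝ)..1, dilogF (x : ℂ) t := rfl
  have hcongr : ∀ t ∈ Set.uIcc (0:ℝ) 1,
      dilogF (x : ℂ) t = ((Real.log (1 - t * x) / t : ℝ) : ℂ) := by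
    intro t ht
    rw [uIcc_of_le zero_le_one] at ht
    rcases eq_or_lt_of_le ht.1 with h0 | h0
    · rw [dilogF, ← h0]
      norm_num
    · have hge : (0:ℝ) ≤ 1 - t * x := by nlinarith [ht.2]
      have hcast : (1 : ℂ) - (t : ℂ) * (x : ℂ) = ((1 - t * x : ℝ) : ℂ) := by push_cast; ring
      rw [dilogF, hcast, ← Complex.ofReal_log hge, Complex.ofReal_div]
  rw [h1, Complex.neg_im, intervalIntegral.integral_congr hcongr,
    intervalIntegral.integral_ofReal]
  simp

private lemma dilog_real_im_gt_one {x : ℝ} (hx : 1 < x) : (dilog (x : ℂ)).im < 0 := by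
  have hx0 : (0:ℝ) < x := by linarith
  set δ : ℝ := (2 * (‖(x : ℂ)‖ + 1))⁻¹ with hδdef
  have hδ : 0 < δ := by positivity
  have hδ1 : δ ≤ 1 := by
    rw [hδdef, inv_le_one_iff₀]
    right
    nlinarith [norm_nonneg (x : ℂ)]
  -- integrability of `Real.log (1 - t * x)` on `δ..1`
  have hrl : IntervalIntegrable (fun t => Real.log (1 - t * x)) volume δ 1 := by
    have h1 := (log_intInt (1 - x * δ) (1 - x)).comp_sub_left 1
    have h2 := h1.comp_mul_left (c := x)
    have he1 : (1 - (1 - x * δ)) / x = δ := by field_simp; ring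
    have he2 : (1 - (1 - x)) / x = 1 := by field_simp; ring
    rw [he1, he2] at h2
    have heq : (fun t => Real.log (1 - x * t)) = fun t => Real.log (1 - t * x) := by
      funext t; ring_nf
    rwa [heq] at h2
  -- integrability of `dilogF x` on `δ..1` by domination
  have hmid : IntervalIntegrable (dilogF (x : ℂ)) volume δ 1 := by
    rw [intervalIntegrable_iff, uIoc_of_le hδ1]
    have hg : IntegrableOn (fun t => (|Real.log (1 - t * x)| + π) / δ)
        (Set.Ioc δ 1) volume := by
      have h := intervalIntegrable_iff.mp hrl
      rw [uIoc_of_le hδ1] at h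
      exact (h.abs.add (integrableOn_const measure_Ioc_lt_top.ne)).div_const δ
    apply MeasureTheory.Integrable.mono hg
      (dilogF_meas (x : ℂ)).aestronglyMeasurable.restrict
    rw [ae_restrict_iff' measurableSet_Ioc]
    filter_upwards with t ht
    have ht0 : 0 < t := hδ.trans ht.1
    have habs : ‖(1 - (t : ℂ) * (x : ℂ))‖ = |1 - t * x| := by
      have hcast : (1 : ℂ) - (t : ℂ) * (x : ℂ) = ((1 - t * x : ℝ) : ℂ) := by push_cast; ring
      rw [hcast, Complex.norm_real, Real.norm_eq_abs]
    have hnormF : ‖dilogF (x : ℂ) t‖ = ‖Complex.log (1 - (t : ℂ) * (x : ℂ))‖ / t := by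
      rw [dilogF, norm_div, Complex.norm_real, Real.norm_eq_abs, abs_of_pos ht0]
    have h1 : ‖Complex.log (1 - (t : ℂ) * (x : ℂ))‖ ≤ |Real.log (1 - t * x)| + π := by
      have h := norm_clog_le (1 - (t : ℂ) * (x : ℂ))
      rwa [habs, Real.log_abs] at h
    have hb : ‖dilogF (x : ℂ) t‖ ≤ (|Real.log (1 - t * x)| + π) / δ := by
      rw [hnormF]
      calc ‖Complex.log (1 - (t : ℂ) * (x : ℂ))‖ / t
          ≤ (|Real.log (1 - t * x)| + π) / t := by gcongr
        _ ≤ (|Real.log (1 - t * x)| + π) / δ := by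
            gcongr
            exact ht.1.le
    refine hb.trans ?_
    rw [Real.norm_eq_abs]
    exact le_abs_self _
  have hi : IntervalIntegrable (dilogF (x : ℂ)) volume 0 1 :=
    (dilogF_near_zero (x : ℂ)).trans hmid
  -- now compute the imaginary part
  set c : ℝ := x⁻¹ with hcdef
  have hc0 : 0 < c := by positivity
  have hc1 : c < 1 := by
    rw [hcdef, inv_lt_one_iff₀]
    right
    exact hx
  have hiIm := dilogF_intInt_im hi
  have hsub1 : Set.uIcc (0:ℝ) c ⊆ Set.uIcc (0:ℝ) 1 := by
    rw [uIcc_of_le hc0.le, uIcc_of_le zero_le_one]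
    exact Icc_subset_Icc le_rfl hc1.le
  have hsub2 : Set.uIcc c 1 ⊆ Set.uIcc (0:ℝ) 1 := by
    rw [uIcc_of_le hc1.le, uIcc_of_le zero_le_one]
    exact Icc_subset_Icc hc0.le le_rfl
  have hint1 : IntervalIntegrable (fun t => (dilogF (x : ℂ) t).im) volume 0 c :=
    hiIm.mono_set hsub1
  have hint2 : IntervalIntegrable (fun t => (dilogF (x : ℂ) t).im) volume c 1 :=
    hiIm.mono_set hsub2
  have hI1 : (∫ t in (0:ℝ)..c, (dilogF (x : ℂ) t).im) = 0 := by
    have hcongr : ∀ t ∈ Set.uIcc (0:ℝ) c, (dilogF (x : ℂ) t).im = 0 := by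
      intro t ht
      rw [uIcc_of_le hc0.le] at ht
      rcases eq_or_lt_of_le ht.1 with h0 | h0
      · rw [dilogF, ← h0]
        norm_num
      · have hge : (0:ℝ) ≤ 1 - t * x := by
          have := ht.2
          rw [hcdef] at this
          have h2 : t * x ≤ 1 := by
            rw [← inv_mul_cancel₀ hx0.ne']
            exact mul_le_mul_of_nonneg_right this hx0.le
          linarith
        have hcast : (1 : ℂ) - (t : ℂ) * (x : ℂ) = ((1 - t * x : ℝ) : ℂ) := by
          push_cast; ring
        rw [dilogF, Complex.div_ofReal_im, Complex.log_im, hcast,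
          Complex.arg_ofReal_of_nonneg hge, zero_div]
    rw [intervalIntegral.integral_congr hcongr]
    simp
  have hI2 : (∫ t in c..1, (dilogF (x : ℂ) t).im) = π * Real.log x := by
    have heq : (∫ t in c..1, (dilogF (x : ℂ) t).im) = ∫ t in c..1, π * (1 / t) := by
      rw [intervalIntegral.integral_of_le hc1.le, intervalIntegral.integral_of_le hc1.le]
      apply MeasureTheory.setIntegral_congr_fun measurableSet_Ioc
      intro t ht
      have ht0 : 0 < t := lt_trans hc0 ht.1
      have hneg : 1 - t * x < 0 := by
        have h2 : 1 < t * x := by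
          rw [← inv_mul_cancel₀ hx0.ne']
          exact mul_lt_mul_of_pos_right ht.1 hx0
        linarith
      have hcast : (1 : ℂ) - (t : ℂ) * (x : ℂ) = ((1 - t * x : ℝ) : ℂ) := by
        push_cast; ring
      simp only
      rw [dilogF, Complex.div_ofReal_im, Complex.log_im, hcast,
        Complex.arg_ofReal_of_neg hneg]
      field_simp
    rw [heq, intervalIntegral.integral_const_mul, integral_one_div]
    · rw [hcdef]
      congr 1
      field_simp
    · intro hcon
      rw [uIcc_of_le hc1.le] at hcon
      exact absurd hcon.1 (by simpa using hc0)
  have hsplit : (∫ t in (0:ℝ)..1, (dilogF (x : ℂ) t).im) = π * Real.log x := by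
    rw [← intervalIntegral.integral_add_adjacent_intervals hint1 hint2, hI1, hI2, zero_add]
  rw [dilog_im_eq hi, hsplit, neg_lt, neg_zero]
  exact mul_pos Real.pi_pos (Real.log_pos hx)

theorem im_dilog_eq_zero_iff (z : ℂ) :
    (dilog z).im = 0 ↔ ∃ x : ℝ, x ≤ 1 ∧ z = (x : ℂ) := by
  constructor
  · intro h
    by_contra hc
    push_neg at hc
    rcases lt_trichotomy z.im 0 with him | him | him
    · have h2 : 0 < (dilog ((starRingEnd ℂ) z)).im := by
        apply dilog_im_pos
        rw [Complex.conj_im]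
        linarith
      rw [dilog_conj (ne_of_lt him), Complex.conj_im, h] at h2
      exact absurd h2 (by norm_num)
    · have hz : z = ((z.re : ℝ) : ℂ) := by
        apply Complex.ext
        · simp
        · simp [him]
      have hre : 1 < z.re := by
        by_contra hre
        push_neg at hre
        exact hc z.re hre hz
      have h3 := dilog_real_im_gt_one hre
      rw [← hz] at h3
      linarith
    · exact absurd h (ne_of_gt (dilog_im_pos him))
  · rintro ⟨x, hx, rfl⟩
    exact dilog_real_im_le_one hx
end

section
/- For real x > 0, Li₂(−x) = −π²/6 − (1/2)·(log x)² − Li₂(−1/x). -/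
open Complex

open MeasureTheory Set Filter intervalIntegral

namespace DilogAux

/-- The real dilog-type integral. -/
noncomputable def F (x : ℝ) : ℝ := ∫ u in (0:ℝ)..x, Real.log (1 + u) / u

lemma meas_g : Measurable fun u : ℝ => Real.log (1 + u) / u :=
  (Real.measurable_log.comp (measurable_const.add measurable_id)).div measurable_id

lemma g_nonneg {u : ℝ} (hu : 0 ≤ u) : 0 ≤ Real.log (1 + u) / u :=
  div_nonneg (Real.log_nonneg (by linarith)) hu

lemma g_le_one {u : ℝ} (hu : 0 ≤ u) : Real.log (1 + u) / u ≤ 1 := by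
  rcases eq_or_lt_of_le hu with h | h
  · simp [← h]
  · rw [div_le_one h]
    have := Real.log_le_sub_one_of_pos (show (0:ℝ) < 1 + u by linarith)
    linarith

lemma g_intable {y : ℝ} (hy : 0 ≤ y) :
    IntervalIntegrable (fun u => Real.log (1 + u) / u) MeasureTheory.volume 0 y := by
  rw [intervalIntegrable_iff_integrableOn_Ioc_of_le hy]
  apply Integrable.mono' (integrableOn_const measure_Ioc_lt_top.ne enorm_ne_top)
    meas_g.aestronglyMeasurable.restrict
  filter_upwards [ae_restrict_mem measurableSet_Ioc] with u hu
  rw [Real.norm_eq_abs, _root_.abs_of_nonneg (g_nonneg hu.1.le)]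
  exact g_le_one hu.1.le

lemma F_deriv {x : ℝ} (hx : 0 < x) : HasDerivAt F (Real.log (1 + x) / x) x := by
  apply intervalIntegral.integral_hasDerivAt_right (g_intable hx.le)
    meas_g.aestronglyMeasurable.stronglyMeasurableAtFilter
  have h1 : ContinuousAt (fun u : ℝ => Real.log (1 + u)) x :=
    (Real.continuousAt_log (by intro hcon; linarith)).comp
      ((continuous_const.add continuous_id).continuousAt)
  exact h1.div continuousAt_id hx.ne'

lemma G_deriv {x : ℝ} (hx : 0 < x) :
    HasDerivAt (fun y => F y + F (1 / y) - Real.log y ^ 2 / 2) 0 x := by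
  have hx1 : (0:ℝ) < 1 / x := by positivity
  have h2 : HasDerivAt (fun y : ℝ => F (1 / y))
      (Real.log (1 + 1 / x) / (1 / x) * (-(x ^ 2)⁻¹)) x := by
    have := (F_deriv (show (0:ℝ) < x⁻¹ by positivity)).comp x (hasDerivAt_inv hx.ne')
    simp only [one_div]
    exact this
  have h3 : HasDerivAt (fun y : ℝ => Real.log y ^ 2 / 2) (Real.log x / x) x := by
    have := ((Real.hasDerivAt_log hx.ne').pow 2).div_const 2
    refine this.congr_deriv ?_
    norm_num
    field_simp
  have h := ((F_deriv hx).add h2).sub h3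
  have e1 : Real.log (1 + 1 / x) = Real.log (1 + x) - Real.log x := by
    rw [show 1 + 1 / x = (1 + x) / x by field_simp; ring,
      Real.log_div (by positivity) hx.ne']
  have e0 : Real.log (1 + x) / x + Real.log (1 + 1 / x) / (1 / x) * -(x ^ 2)⁻¹
      - Real.log x / x = 0 := by
    rw [e1]; field_simp; ring
  exact e0 ▸ h

lemma G_const {x : ℝ} (hx : 0 < x) :
    F x + F (1 / x) - Real.log x ^ 2 / 2 = 2 * F 1 := by
  set G : ℝ → ℝ := fun y => F y + F (1 / y) - Real.log y ^ 2 / 2 with hG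
  have key : ∀ a b : ℝ, 0 < a → a ≤ b → G b = G a := by
    intro a b ha hab
    have : ∀ y ∈ Icc a b, G y = G a := by
      apply constant_of_has_deriv_right_zero
      · intro y hy
        exact (G_deriv (lt_of_lt_of_le ha hy.1)).continuousAt.continuousWithinAt
      · intro y hy
        exact (G_deriv (lt_of_lt_of_le ha hy.1)).hasDerivWithinAt
    exact this b ⟨hab, le_rfl⟩
  have hGx : G x = G 1 := by
    rcases le_total x 1 with h | h
    · exact (key x 1 hx h).symm
    · exact key 1 x one_pos h
  have h1 : G 1 = 2 * F 1 := by norm_num [hG]; ring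
  rw [← h1, ← hGx]

lemma basel1 : HasSum (fun n : ℕ => 1 / ((n : ℝ) + 1) ^ 2) (Real.pi ^ 2 / 6) := by
  have h := (hasSum_nat_add_iff' (f := fun n : ℕ => (1:ℝ) / (n:ℝ) ^ 2) 1).2 hasSum_zeta_two
  simpa using h

lemma hodd : HasSum (fun m : ℕ => 1 / (2 * (m : ℝ) + 2) ^ 2) (Real.pi ^ 2 / 24) := by
  have h := basel1.mul_left (1 / 4)
  have e : (fun m : ℕ => (1:ℝ)/4 * (1 / ((m : ℝ) + 1) ^ 2))
      = fun m : ℕ => 1 / (2 * (m : ℝ) + 2) ^ 2 := by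
    funext m
    have : (0:ℝ) < (m:ℝ) + 1 := by positivity
    field_simp
    ring
  rw [e, show (1:ℝ)/4 * (Real.pi ^ 2 / 6) = Real.pi ^ 2 / 24 by ring] at h
  exact h

lemma heven_summable : Summable (fun m : ℕ => 1 / (2 * (m : ℝ) + 1) ^ 2) := by
  refine basel1.summable.of_nonneg_of_le (fun m => by positivity) (fun m => ?_)
  have h1 : (0:ℝ) < ((m:ℝ) + 1) ^ 2 := by positivity
  have h2 : ((m:ℝ) + 1) ^ 2 ≤ (2 * (m:ℝ) + 1) ^ 2 := by nlinarith [Nat.cast_nonneg (α := ℝ) m]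
  exact one_div_le_one_div_of_le h1 h2

lemma hV : HasSum (fun m : ℕ => 1 / (2 * (m : ℝ) + 1) ^ 2 - 1 / (2 * (m : ℝ) + 2) ^ 2)
    (Real.pi ^ 2 / 12) := by
  have hSe := heven_summable.hasSum
  have hcomb : HasSum (fun n : ℕ => 1 / ((n : ℝ) + 1) ^ 2)
      ((∑' m : ℕ, 1 / (2 * (m : ℝ) + 1) ^ 2) + Real.pi ^ 2 / 24) := by
    apply HasSum.even_add_odd
    · convert hSe using 2 with m
      push_cast
      ring
    · convert hodd using 2 with m
      push_cast
      ring
  have he : (∑' m : ℕ, 1 / (2 * (m : ℝ) + 1) ^ 2) = Real.pi ^ 2 / 8 := by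
    have := hcomb.unique basel1
    linarith
  have := hSe.sub hodd
  rw [he] at this
  rw [show Real.pi ^ 2 / 12 = Real.pi ^ 2 / 8 - Real.pi ^ 2 / 24 by ring]
  exact this

lemma hasSumT {u : ℝ} (hu0 : 0 < u) (hu1 : u < 1) :
    HasSum (fun m : ℕ => u ^ (2*m) / (2*(m:ℝ)+1) - u ^ (2*m+1) / (2*(m:ℝ)+2))
      (Real.log (1 + u) / u) := by
  have hune : u ≠ 0 := hu0.ne'
  have h0 : |(-u)| < 1 := by rwa [abs_neg, abs_of_pos hu0]
  have ha : HasSum (fun n : ℕ => -((-u) ^ (n+1) / ((n:ℝ)+1)) / u) (Real.log (1 + u) / u) := by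
    have h1 := (Real.hasSum_pow_div_log_of_abs_lt_one h0).neg.div_const u
    simpa [sub_neg_eq_add] using h1
  have haeven : ∀ m : ℕ, -((-u) ^ (2*m+1) / (((2*m : ℕ):ℝ)+1)) / u
      = u ^ (2*m) / (2*(m:ℝ)+1) := by
    intro m
    rw [Odd.neg_pow ⟨m, by ring⟩]
    push_cast
    have h2 : 2*(m:ℝ)+1 ≠ 0 := by positivity
    field_simp
    ring
  have haodd : ∀ m : ℕ, -((-u) ^ (2*m+1+1) / (((2*m+1 : ℕ):ℝ)+1)) / u
      = -(u ^ (2*m+1) / (2*(m:ℝ)+2)) := by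
    intro m
    rw [Even.neg_pow ⟨m+1, by ring⟩]
    push_cast
    have h2 : 2*(m:ℝ)+2 ≠ 0 := by positivity
    field_simp
    ring
  have hgeo : Summable fun m : ℕ => (u^2) ^ m :=
    summable_geometric_of_lt_one (by positivity) (by nlinarith)
  have heS : Summable (fun m : ℕ => u ^ (2*m) / (2*(m:ℝ)+1)) := by
    refine hgeo.of_nonneg_of_le (fun m => by positivity) (fun m => ?_)
    rw [← pow_mul]
    exact div_le_self (by positivity) (by linarith [Nat.cast_nonneg (α := ℝ) m])
  have hoS : Summable (fun m : ℕ => u ^ (2*m+1) / (2*(m:ℝ)+2)) := by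
    refine hgeo.of_nonneg_of_le (fun m => by positivity) (fun m => ?_)
    calc u ^ (2*m+1) / (2*(m:ℝ)+2) ≤ u ^ (2*m+1) :=
          div_le_self (by positivity) (by linarith [Nat.cast_nonneg (α := ℝ) m])
      _ ≤ u ^ (2*m) := pow_le_pow_of_le_one hu0.le hu1.le (Nat.le_succ _)
      _ = (u^2) ^ m := by rw [← pow_mul]
  have hEA : HasSum (fun n : ℕ => -((-u) ^ (n+1) / ((n:ℝ)+1)) / u)
      ((∑' m : ℕ, u ^ (2*m) / (2*(m:ℝ)+1)) + -(∑' m : ℕ, u ^ (2*m+1) / (2*(m:ℝ)+2))) := by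
    apply HasSum.even_add_odd
    · simp only [haeven]
      exact heS.hasSum
    · simp only [haodd]
      exact hoS.hasSum.neg
  have hkey : (∑' m : ℕ, u ^ (2*m) / (2*(m:ℝ)+1)) + -(∑' m : ℕ, u ^ (2*m+1) / (2*(m:ℝ)+2))
      = Real.log (1 + u) / u := hEA.unique ha
  have h5 := heS.hasSum.sub hoS.hasSum
  rwa [sub_eq_add_neg, hkey] at h5

lemma F_one : F 1 = Real.pi ^ 2 / 12 := by
  have hTcont : ∀ m : ℕ, Continuous
      (fun u : ℝ => u ^ (2*m) / (2*(m:ℝ)+1) - u ^ (2*m+1) / (2*(m:ℝ)+2)) := by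
    intro m
    exact ((continuous_pow _).div_const _).sub ((continuous_pow _).div_const _)
  have hTint : ∀ m : ℕ, IntegrableOn
      (fun u : ℝ => u ^ (2*m) / (2*(m:ℝ)+1) - u ^ (2*m+1) / (2*(m:ℝ)+2)) (Ioo 0 1)
      MeasureTheory.volume := fun m =>
    ((hTcont m).integrableOn_Icc (a := 0) (b := 1)).mono_set Ioo_subset_Icc_self
  have hTnonneg : ∀ m : ℕ, ∀ u ∈ Ioo (0:ℝ) 1,
      0 ≤ u ^ (2*m) / (2*(m:ℝ)+1) - u ^ (2*m+1) / (2*(m:ℝ)+2) := by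
    intro m u hu
    have h1 : u ^ (2*m+1) / (2*(m:ℝ)+2) ≤ u ^ (2*m) / (2*(m:ℝ)+1) := by
      apply div_le_div₀ (pow_nonneg hu.1.le _)
        (pow_le_pow_of_le_one hu.1.le hu.2.le (Nat.le_succ _)) (by positivity)
        (by linarith [Nat.cast_nonneg (α := ℝ) m])
    linarith
  have hTval : ∀ m : ℕ, (∫ u in Ioo (0:ℝ) 1, (u ^ (2*m) / (2*(m:ℝ)+1) - u ^ (2*m+1) / (2*(m:ℝ)+2)))
      = 1 / (2*(m:ℝ)+1) ^ 2 - 1 / (2*(m:ℝ)+2) ^ 2 := by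
    intro m
    rw [← MeasureTheory.integral_Ioc_eq_integral_Ioo,
      ← intervalIntegral.integral_of_le zero_le_one,
      intervalIntegral.integral_sub ((intervalIntegral.intervalIntegrable_pow _).div_const _)
        ((intervalIntegral.intervalIntegrable_pow _).div_const _),
      intervalIntegral.integral_div, intervalIntegral.integral_div,
      integral_pow, integral_pow]
    have c1 : 2*(m:ℝ)+1 ≠ 0 := by positivity
    have c2 : 2*(m:ℝ)+2 ≠ 0 := by positivity
    rw [zero_pow (by omega), zero_pow (by omega)]
    push_cast
    rw [one_pow]
    field_simp
    ring
  have h1 : F 1 = ∫ u in Ioo (0:ℝ) 1, Real.log (1+u) / u := by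
    rw [F, intervalIntegral.integral_of_le zero_le_one,
      MeasureTheory.integral_Ioc_eq_integral_Ioo]
  have h2 : ∫ u in Ioo (0:ℝ) 1, Real.log (1+u) / u
      = ∫ u in Ioo (0:ℝ) 1, ∑' m : ℕ, (u ^ (2*m) / (2*(m:ℝ)+1) - u ^ (2*m+1) / (2*(m:ℝ)+2)) :=
    MeasureTheory.setIntegral_congr_fun measurableSet_Ioo
      (fun u hu => ((hasSumT hu.1 hu.2).tsum_eq).symm)
  have hnorm : (fun m : ℕ => ∫ u in Ioo (0:ℝ) 1,
        ‖u ^ (2*m) / (2*(m:ℝ)+1) - u ^ (2*m+1) / (2*(m:ℝ)+2)‖)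
      = fun m : ℕ => 1 / (2*(m:ℝ)+1) ^ 2 - 1 / (2*(m:ℝ)+2) ^ 2 := by
    funext m
    rw [← hTval m]
    apply MeasureTheory.setIntegral_congr_fun measurableSet_Ioo
    intro u hu
    exact Real.norm_of_nonneg (hTnonneg m u hu)
  have h3 : (∑' m : ℕ, ∫ u in Ioo (0:ℝ) 1,
        (u ^ (2*m) / (2*(m:ℝ)+1) - u ^ (2*m+1) / (2*(m:ℝ)+2)))
      = ∫ u in Ioo (0:ℝ) 1, ∑' m : ℕ, (u ^ (2*m) / (2*(m:ℝ)+1) - u ^ (2*m+1) / (2*(m:ℝ)+2)) := by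
    apply MeasureTheory.integral_tsum_of_summable_integral_norm hTint
    rw [hnorm]
    exact hV.summable
  rw [h1, h2, ← h3]
  have h4 : (fun m : ℕ => ∫ u in Ioo (0:ℝ) 1,
        (u ^ (2*m) / (2*(m:ℝ)+1) - u ^ (2*m+1) / (2*(m:ℝ)+2)))
      = fun m : ℕ => 1 / (2*(m:ℝ)+1) ^ 2 - 1 / (2*(m:ℝ)+2) ^ 2 := funext hTval
  rw [h4]
  exact hV.tsum_eq

lemma keyF {x : ℝ} (hx : 0 < x) :
    F x + F (1 / x) = Real.pi ^ 2 / 6 + Real.log x ^ 2 / 2 := by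
  have h1 := G_const hx
  have h2 := F_one
  linarith

lemma dilog_neg_ofReal {x : ℝ} (hx : 0 < x) : dilog (-(x : ℂ)) = -((F x : ℝ) : ℂ) := by
  rw [dilog]
  have h1 : Set.EqOn (fun t : ℝ => Complex.log (1 - (t:ℂ) * (-(x:ℂ))) / (t:ℂ))
      (fun t : ℝ => ((Real.log (1 + t * x) / t : ℝ) : ℂ)) (Set.uIcc (0:ℝ) 1) := by
    intro t ht
    rw [Set.uIcc_of_le zero_le_one] at ht
    have ht0 : 0 ≤ t := ht.1
    have e : (1 : ℂ) - (t:ℂ) * (-(x:ℂ)) = ((1 + t * x : ℝ) : ℂ) := by push_cast; ring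
    simp only
    rw [e, ← Complex.ofReal_log (by positivity), Complex.ofReal_div]
  rw [intervalIntegral.integral_congr h1, intervalIntegral.integral_ofReal]
  congr 1
  rw [Complex.ofReal_inj]
  have h2 : ∀ t : ℝ, Real.log (1 + t * x) / t = x * (Real.log (1 + x * t) / (x * t)) := by
    intro t
    rcases eq_or_ne t 0 with rfl | ht
    · simp
    · rw [mul_comm x t]
      field_simp
  simp only [h2]
  rw [intervalIntegral.integral_const_mul,
    intervalIntegral.integral_comp_mul_left (fun u => Real.log (1 + u) / u) hx.ne']
  simp only [mul_zero, mul_one, smul_eq_mul]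
  rw [F, ← mul_assoc, mul_inv_cancel₀ hx.ne', one_mul]

end DilogAux

theorem dilog_inversion (x : ℝ) (hx : 0 < x) :
    dilog (-(x : ℂ)) =
      -(Real.pi ^ 2 / 6 : ℝ) - (1 / 2 : ℂ) * (Real.log x : ℂ) ^ 2
        - dilog (-(1 / (x : ℂ))) := by
  have hx' : 0 < 1 / x := by positivity
  have e : -(1 / (x:ℂ)) = -(((1 / x : ℝ) : ℝ) : ℂ) := by push_cast; ring
  rw [e, DilogAux.dilog_neg_ofReal hx, DilogAux.dilog_neg_ofReal hx']
  have hkey := DilogAux.keyF hx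
  rw [show DilogAux.F x = Real.pi ^ 2 / 6 + Real.log x ^ 2 / 2 - DilogAux.F (1 / x) by linarith]
  push_cast
  ring
end

section
/- For real x ≥ 1, Li₂(−x) = −π²/6 − (1/2)(log x)² + ε for some real ε with |ε| ≤ π²/(6x). -/
open Complex

open MeasureTheory intervalIntegral Set

namespace DilogAux

noncomputable def g (u : ℝ) : ℝ := Real.log (1 + u) / u

lemma g_nonneg_s7 {u : ℝ} (hu : 0 ≤ u) : 0 ≤ g u :=
  div_nonneg (Real.log_nonneg (by linarith)) hu

lemma g_le_one_s7 {u : ℝ} (hu : 0 ≤ u) : g u ≤ 1 := by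
  rcases eq_or_lt_of_le hu with h | h
  · simp [g, ← h]
  · rw [g, div_le_one h]
    have := Real.log_le_sub_one_of_pos (show (0:ℝ) < 1 + u by linarith)
    linarith

lemma g_meas : Measurable g :=
  (Real.measurable_log.comp (measurable_const.add measurable_id)).div measurable_id

lemma g_contOn {s : Set ℝ} (hs : ∀ u ∈ s, 0 < u) : ContinuousOn g s := by
  intro u hu
  have h := hs u hu
  exact (((continuousAt_const.add continuousAt_id).log (by simp; linarith)).div
    continuousAt_id h.ne').continuousWithinAt

lemma g_intble {a b : ℝ} (ha : 0 ≤ a) (hb : 0 ≤ b) : IntervalIntegrable g volume a b := by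
  apply (_root_.intervalIntegrable_const (c := (1:ℝ))).mono_fun g_meas.aestronglyMeasurable.restrict
  filter_upwards [ae_restrict_mem measurableSet_uIoc] with u hu
  have h0 : 0 ≤ u := le_trans (le_min ha hb) hu.1.le
  rw [Real.norm_eq_abs, norm_one, _root_.abs_of_nonneg (g_nonneg_s7 h0)]
  exact g_le_one_s7 h0

end DilogAux
lemma hasSum_eta2' : HasSum (fun n : ℕ => (-1:ℝ)^(n+1) / (n:ℝ)^2) (Real.pi^2/12) := by
  have hz := hasSum_zeta_two
  have heven : HasSum (fun n : ℕ => if Even n then (1:ℝ)/(n:ℝ)^2 else 0) (Real.pi^2/6/4) := by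
    have hinj : Function.Injective (fun n : ℕ => 2*n) := fun a b h => by simpa using h
    refine (Function.Injective.hasSum_iff hinj ?_).1 ?_
    · intro n hn
      have hodd : ¬ Even n := by
        simp only [Set.mem_range, not_exists] at hn
        rintro ⟨k, hk⟩; exact hn k (by omega)
      simp [hodd]
    · have h4 := hz.div_const 4
      convert h4 using 1
      · rfl
      funext n
      rcases Nat.eq_zero_or_pos n with rfl | hn
      · simp
      · have he : Even (2*n) := ⟨n, by ring⟩
        simp only [Function.comp, he, if_true]
        have hn' : (n:ℝ) ≠ 0 := Nat.cast_ne_zero.2 hn.ne'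
        push_cast
        field_simp
        ring
  have hcomb := hz.sub (heven.mul_left 2)
  have hval : Real.pi^2/6 - 2*(Real.pi^2/6/4) = Real.pi^2/12 := by ring
  rw [hval] at hcomb
  convert hcomb using 1
  · rfl
  funext n
  rcases Nat.even_or_odd n with he | ho
  · rw [Odd.neg_one_pow he.add_one, if_pos he]; ring
  · rw [Even.neg_one_pow ho.add_one, if_neg (Nat.not_even_iff_odd.2 ho)]; ring

lemma hasSum_eta2 : HasSum (fun n : ℕ => (-1:ℝ)^n / ((n:ℝ)+1)^2) (Real.pi^2/12) := by
  have h := (hasSum_nat_add_iff (f := fun n : ℕ => (-1:ℝ)^(n+1) / (n:ℝ)^2) 1).2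
    (by simpa using hasSum_eta2')
  convert h using 1
  · rfl
  funext n
  push_cast
  rw [show n + 1 + 1 = n + 2 from rfl, pow_add]
  norm_num

open DilogAux

lemma integral_pow_Ioc (n : ℕ) : ∫ u in Ioc (0:ℝ) 1, u^n = 1/((n:ℝ)+1) := by
  rw [← intervalIntegral.integral_of_le zero_le_one, integral_pow]
  push_cast
  norm_num

lemma integral_g_one : ∫ u in (0:ℝ)..1, g u = Real.pi^2/12 := by
  rw [intervalIntegral.integral_of_le zero_le_one]
  set F : ℕ → ℝ → ℝ := fun n u => (-1:ℝ)^n * u^n / ((n:ℝ)+1) with hF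
  have hFcont : ∀ n, Continuous (F n) := fun n => by
    simpa [hF] using ((continuous_const.mul (continuous_pow n)).div_const _)
  have hFint : ∀ n : ℕ, Integrable (F n) (volume.restrict (Ioc (0:ℝ) 1)) := fun n =>
    (hFcont n).integrableOn_Ioc
  have hnorm : ∀ n : ℕ, ∫ u in Ioc (0:ℝ) 1, ‖F n u‖ = 1/(((n:ℝ)+1)^2) := by
    intro n
    have : ∀ u ∈ Ioc (0:ℝ) 1, ‖F n u‖ = u^n / ((n:ℝ)+1) := by
      intro u hu
      rw [Real.norm_eq_abs, hF, _root_.abs_div, _root_.abs_mul, _root_.abs_pow, _root_.abs_pow, _root_.abs_neg, _root_.abs_one,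
        one_pow, one_mul, _root_.abs_of_pos hu.1, _root_.abs_of_pos (by positivity : (0:ℝ) < (n:ℝ)+1)]
    rw [setIntegral_congr_fun measurableSet_Ioc this]
    rw [MeasureTheory.integral_div, integral_pow_Ioc]
    rw [div_div, ← sq]
  have hsum : Summable fun n : ℕ => ∫ u in Ioc (0:ℝ) 1, ‖F n u‖ := by
    simp_rw [hnorm]
    have := hasSum_eta2.summable.abs
    refine this.congr fun n => ?_
    rw [_root_.abs_div, _root_.abs_pow, _root_.abs_neg, _root_.abs_one, one_pow,
      _root_.abs_of_pos (by positivity : (0:ℝ) < ((n:ℝ)+1)^2)]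
  have key := hasSum_integral_of_summable_integral_norm hFint hsum
  have hint_eq : ∀ n : ℕ, ∫ u in Ioc (0:ℝ) 1, F n u = (-1:ℝ)^n / ((n:ℝ)+1)^2 := by
    intro n
    simp_rw [hF, mul_div_assoc, MeasureTheory.integral_const_mul, MeasureTheory.integral_div,
      integral_pow_Ioc, div_div, ← sq, mul_one_div]
  simp_rw [hint_eq] at key
  have htot : ∫ u in Ioc (0:ℝ) 1, (∑' n : ℕ, F n u) = Real.pi^2/12 :=
    key.unique hasSum_eta2
  rw [← htot]
  apply setIntegral_congr_ae measurableSet_Ioc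
  filter_upwards [compl_mem_ae_iff.2 (Real.volume_singleton (a := 1))] with u hu1 hu
  have huo : u ∈ Ioo (0:ℝ) 1 := ⟨hu.1, lt_of_le_of_ne hu.2 (by simpa using hu1)⟩
  have h := Real.hasSum_pow_div_log_of_abs_lt_one (x := -u)
    (by rw [_root_.abs_neg, _root_.abs_of_pos huo.1]; exact huo.2)
  have h2 := h.div_const (-u)
  have heq : (fun n : ℕ => (-u)^(n+1)/((n:ℝ)+1)/(-u)) = fun n => F n u := by
    funext n
    have hne : u ≠ 0 := huo.1.ne'
    rw [hF, neg_pow, pow_succ]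
    field_simp
    ring
  have hval : -Real.log (1 - -u) / (-u) = g u := by
    rw [g, show (1:ℝ) - -u = 1 + u by ring, neg_div_neg_eq]
  rw [heq, hval] at h2
  exact h2.tsum_eq.symm

lemma int_scale {x : ℝ} (hx : 1 ≤ x) :
    ∫ t in (0:ℝ)..1, Real.log (1+t*x)/t = ∫ u in (0:ℝ)..x, g u := by
  have hx0 : (0:ℝ) < x := by linarith
  have h1 : ∫ t in (0:ℝ)..1, Real.log (1+t*x)/t = ∫ t in (0:ℝ)..1, x • g (x * t) := by
    apply intervalIntegral.integral_congr
    intro t ht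
    rw [uIcc_of_le zero_le_one] at ht
    rcases eq_or_lt_of_le ht.1 with h | h
    · simp [g, ← h]
    · simp only [smul_eq_mul, g, mul_comm t x]
      have ht0 : t ≠ 0 := h.ne'
      field_simp
  rw [h1, intervalIntegral.integral_smul, intervalIntegral.smul_integral_comp_mul_left g x]
  norm_num

lemma integral_logu {x : ℝ} (hx : 1 ≤ x) :
    ∫ u in (1:ℝ)..x, Real.log u / u = (Real.log x)^2/2 := by
  rw [intervalIntegral.integral_eq_sub_of_hasDerivAt (f := fun u => (Real.log u)^2/2)
    (f' := fun u => Real.log u / u)]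
  · simp
  · intro u hu
    rw [uIcc_of_le hx] at hu
    have hu0 : (0:ℝ) < u := lt_of_lt_of_le one_pos hu.1
    have := ((Real.hasDerivAt_log hu0.ne').pow 2).div_const 2
    convert this using 1
    · rfl
    · rfl
    field_simp
    ring
  · apply ContinuousOn.intervalIntegrable
    rw [uIcc_of_le hx]
    intro u hu
    have hu0 : (0:ℝ) < u := lt_of_lt_of_le one_pos hu.1
    exact ((Real.continuousAt_log hu0.ne').continuousWithinAt.div
      continuousWithinAt_id hu0.ne')

lemma cont_inv_piece {x : ℝ} (hx : 1 ≤ x) :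
    ContinuousOn (fun u : ℝ => g u⁻¹ / u^2) (uIcc 1 x) := by
  rw [uIcc_of_le hx]
  have hpos : ∀ u ∈ Icc (1:ℝ) x, (0:ℝ) < u := fun u hu => lt_of_lt_of_le one_pos hu.1
  apply ContinuousOn.div
  · apply ContinuousOn.comp (g_contOn (s := Ioi (0:ℝ)) (fun v hv => hv))
    · intro u hu
      exact (continuousAt_inv₀ (hpos u hu).ne').continuousWithinAt
    · intro u hu
      exact inv_pos.2 (hpos u hu)
  · exact (continuous_pow 2).continuousOn
  · intro u hu
    exact pow_ne_zero 2 (hpos u hu).ne'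

lemma integral_inv_sub {x : ℝ} (hx : 1 ≤ x) :
    ∫ u in (1:ℝ)..x, g u⁻¹ / u^2 = ∫ v in x⁻¹..(1:ℝ), g v := by
  have hpos : ∀ u ∈ uIcc (1:ℝ) x, (0:ℝ) < u := by
    rw [uIcc_of_le hx]; exact fun u hu => lt_of_lt_of_le one_pos hu.1
  have h := intervalIntegral.integral_comp_smul_deriv' (a := 1) (b := x)
    (f := fun u : ℝ => u⁻¹) (f' := fun u : ℝ => -((u^2)⁻¹)) (g := g)
    (fun u hu => hasDerivAt_inv (hpos u hu).ne')
    (by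
      apply ContinuousOn.neg
      apply ContinuousOn.inv₀ (continuous_pow 2).continuousOn
      exact fun u hu => pow_ne_zero 2 (hpos u hu).ne')
    (by
      apply g_contOn
      rintro v ⟨u, hu, rfl⟩
      exact inv_pos.2 (hpos u hu))
  simp only [Function.comp] at h
  rw [show ∫ u in (1:ℝ)..x, -((u^2)⁻¹) • g u⁻¹ = -∫ u in (1:ℝ)..x, g u⁻¹ / u^2 by
      rw [← intervalIntegral.integral_neg]
      apply intervalIntegral.integral_congr
      intro u hu
      simp [smul_eq_mul, div_eq_mul_inv, mul_comm]] at h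
  rw [inv_one] at h
  rw [intervalIntegral.integral_symm 1 x⁻¹, ← h, neg_neg]

lemma g_split {u : ℝ} (hu : 1 ≤ u) : g u = Real.log u / u + g u⁻¹ / u^2 := by
  have hu0 : (0:ℝ) < u := lt_of_lt_of_le one_pos hu
  have h1 : 1 + u⁻¹ = (1+u)/u := by field_simp; ring
  rw [g, g, h1, Real.log_div (by positivity) hu0.ne']
  field_simp
  ring

lemma G_inversion {x : ℝ} (hx : 1 ≤ x) :
    ∫ u in (0:ℝ)..x, g u
      = Real.pi^2/6 + (Real.log x)^2/2 - ∫ u in (0:ℝ)..x⁻¹, g u := by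
  have hx0 : (0:ℝ) < x := by linarith
  have hix0 : (0:ℝ) < x⁻¹ := by positivity
  have hix1 : x⁻¹ ≤ 1 := by
    rw [inv_le_one_iff₀]; right; exact hx
  have hsplit : (∫ u in (0:ℝ)..1, g u) + ∫ u in (1:ℝ)..x, g u = ∫ u in (0:ℝ)..x, g u :=
    intervalIntegral.integral_add_adjacent_intervals
      (g_intble le_rfl zero_le_one) (g_intble zero_le_one hx0.le)
  have hmid : ∫ u in (1:ℝ)..x, g u
      = ∫ u in (1:ℝ)..x, (Real.log u / u + g u⁻¹ / u^2) := by
    apply intervalIntegral.integral_congr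
    intro u hu
    rw [uIcc_of_le hx] at hu
    exact g_split hu.1
  have hint1 : IntervalIntegrable (fun u => Real.log u / u) volume 1 x := by
    apply ContinuousOn.intervalIntegrable
    rw [uIcc_of_le hx]
    intro u hu
    have hu0 : (0:ℝ) < u := lt_of_lt_of_le one_pos hu.1
    exact ((Real.continuousAt_log hu0.ne').continuousWithinAt.div
      continuousWithinAt_id hu0.ne')
  have hint2 : IntervalIntegrable (fun u => g u⁻¹ / u^2) volume 1 x :=
    (cont_inv_piece hx).intervalIntegrable
  have hadd : ∫ u in (1:ℝ)..x, (Real.log u / u + g u⁻¹ / u^2)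
      = (∫ u in (1:ℝ)..x, Real.log u / u) + ∫ u in (1:ℝ)..x, g u⁻¹ / u^2 :=
    intervalIntegral.integral_add hint1 hint2
  have h2 : (∫ v in (0:ℝ)..x⁻¹, g v) + ∫ v in x⁻¹..1, g v = ∫ v in (0:ℝ)..1, g v :=
    intervalIntegral.integral_add_adjacent_intervals
      (g_intble le_rfl hix0.le) (g_intble hix0.le zero_le_one)
  rw [← hsplit, hmid, hadd, integral_logu hx, integral_inv_sub hx, integral_g_one]
  rw [integral_g_one] at h2
  linarith

lemma pi_sq_gt_six : (6:ℝ) < Real.pi^2 := by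
  nlinarith [Real.pi_gt_three]

theorem dilog_neg_asymptotic (x : ℝ) (hx : 1 ≤ x) :
    ∃ ε : ℝ, |ε| ≤ Real.pi ^ 2 / (6 * x) ∧
      dilog (-(x : ℂ)) =
        ((-(Real.pi ^ 2) / 6 - (1 / 2) * (Real.log x) ^ 2 + ε : ℝ) : ℂ) := by
  have hx0 : (0:ℝ) < x := by linarith
  have hix0 : (0:ℝ) < x⁻¹ := by positivity
  refine ⟨∫ u in (0:ℝ)..x⁻¹, g u, ?_, ?_⟩
  · have h0 : 0 ≤ ∫ u in (0:ℝ)..x⁻¹, g u :=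
      intervalIntegral.integral_nonneg hix0.le (fun u hu => g_nonneg_s7 hu.1)
    rw [_root_.abs_of_nonneg h0]
    have h1 : ∫ u in (0:ℝ)..x⁻¹, g u ≤ ∫ u in (0:ℝ)..x⁻¹, (1:ℝ) :=
      intervalIntegral.integral_mono_on hix0.le (g_intble le_rfl hix0.le)
        (_root_.intervalIntegrable_const) (fun u hu => g_le_one_s7 hu.1)
    simp only [intervalIntegral.integral_const, smul_eq_mul, mul_one, sub_zero] at h1
    have h2 : x⁻¹ ≤ Real.pi^2/(6*x) := by
      rw [le_div_iff₀ (by positivity : (0:ℝ) < 6*x)]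
      have h3 : x⁻¹ * (6*x) = 6 := by field_simp
      rw [h3]
      exact pi_sq_gt_six.le
    linarith
  · have hceq : dilog (-(x:ℂ)) = ((-(∫ u in (0:ℝ)..x, g u) : ℝ) : ℂ) := by
      rw [dilog]
      have heq : ∫ t in (0:ℝ)..1, Complex.log (1 - (t:ℂ) * -(x:ℂ)) / (t:ℂ)
          = ((∫ t in (0:ℝ)..1, Real.log (1+t*x)/t : ℝ) : ℂ) := by
        rw [← intervalIntegral.integral_ofReal]
        apply intervalIntegral.integral_congr
        intro t ht
        rw [uIcc_of_le zero_le_one] at ht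
        have hnn : (0:ℝ) ≤ 1 + t*x := by nlinarith [ht.1, ht.2]
        show Complex.log (1 - (t:ℂ) * -(x:ℂ)) / (t:ℂ) = ((Real.log (1+t*x)/t : ℝ) : ℂ)
        rw [show (1:ℂ) - (t:ℂ) * -(x:ℂ) = ((1 + t*x : ℝ) : ℂ) by push_cast; ring,
          ← Complex.ofReal_log hnn, Complex.ofReal_div]
      rw [heq, int_scale hx]
      simp
    rw [hceq, G_inversion hx]
    exact Complex.ofReal_inj.2 (by ring)
end
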